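/- Let G be a finite vertex-transitive graph of degree d with simple random walk transition matrix M, fix a vertex o, and let B be a random real matrix indexed by the vertices of G satisfying: B_{u,v} has mean 0 and variance 1 for every edge uv, |B_{u,v}| \le c_1 M_{u,v} almost surely, the rows (B_{u,\cdot})_u are independent, \sum_{g \in Stab(u)} B_{u,gv} = 0 for all u, v (Stab(u) the stabilizer of u in Aut(G)), and the law of B is invariant under Aut(G) (i.e., (B_{gu,gv})_{u,v} has the same law as B for every automorphism g). Define Y_j(G,v,w) = \sum_{j_1+j_2+2=j,\, j_1,j_2 \ge 0}(BM^{j_1})_{v,w}(BM^{j_2})_{w,v} and T_G(z^j) = |G|^{-1/2}(j/2)\sum_{k_1+k_2+2=j} Tr(BM^{k_1}BM^{k_2}). Then for all integers i, j \ge 0: E[T_G(z^j)] = 0 and E[T_G(z^i) T_G(z^j)] = (ij/2) \sum_{v \ne o} E[ Y_i(G,o,v) Y_j(G,o,v) ]. -/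

import Mathlib

open Matrix Finset MeasureTheory ProbabilityTheory

/-- For a finite vertex-transitive graph `G` with walk matrix `M` and a
random matrix `B` (mean-zero, variance-one entries on edges, `|B| ≤ c₁ M` a.s.,
independent rows, stabilizer sums zero, law invariant under `Aut(G)`),
the functionals `T_G(z^j)` have mean zero and covariance
`E[T_G(z^i)T_G(z^j)] = (ij/2) ∑_{v≠o} E[Y_i(G,o,v) Y_j(G,o,v)]`. -/
theorem monomial_covariance {V : Type*} [Fintype V] [DecidableEq V]
    (G : SimpleGraph V) [DecidableRel G.Adj] (o : V) (d : ℕ)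
    (hreg : ∀ v : V, G.degree v = d)
    (htrans : ∀ u v : V, ∃ e : Equiv.Perm V,
      (∀ a b : V, G.Adj (e a) (e b) ↔ G.Adj a b) ∧ e u = v)
    (M : Matrix V V ℝ)
    (hM : ∀ u v : V, M u v = if G.Adj u v then (1 : ℝ) / d else 0)
    {Ω : Type*} [MeasurableSpace Ω] (μ : Measure Ω) [IsProbabilityMeasure μ]
    (B : Ω → Matrix V V ℝ) (hBmeas : ∀ u v, Measurable fun ω => B ω u v)
    (c₁ : ℝ) (hc₁ : 0 < c₁)
    (hmean : ∀ u v : V, G.Adj u v → (∫ ω, B ω u v ∂μ) = 0)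
    (hvar : ∀ u v : V, G.Adj u v → (∫ ω, (B ω u v) ^ 2 ∂μ) = 1)
    (hBbound : ∀ᵐ ω ∂μ, ∀ u v, |B ω u v| ≤ c₁ * M u v)
    (hrows : iIndepFun (m := fun _ : V => (inferInstance : MeasurableSpace (V → ℝ)))
      (fun u ω => fun v => B ω u v) μ)
    (hstab : ∀ ω, ∀ u v : V,
      ∑ g ∈ Finset.univ.filter
          (fun e : Equiv.Perm V =>
            (∀ a b : V, G.Adj (e a) (e b) ↔ G.Adj a b) ∧ e u = u),
        B ω u (g v) = 0)
    (hinv : ∀ e : Equiv.Perm V, (∀ a b : V, G.Adj (e a) (e b) ↔ G.Adj a b) →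
      Measure.map (fun ω => fun u v : V => B ω (e u) (e v)) μ =
        Measure.map (fun ω => fun u v : V => B ω u v) μ)
    (Y : ℕ → V → V → Ω → ℝ)
    (hY : ∀ j v w ω, Y j v w ω =
      ∑ p ∈ (Finset.range j ×ˢ Finset.range j).filter (fun p => p.1 + p.2 + 2 = j),
        (B ω * M ^ p.1) v w * (B ω * M ^ p.2) w v)
    (T : ℕ → Ω → ℝ)
    (hT : ∀ j ω, T j ω = (Real.sqrt (Fintype.card V))⁻¹ * ((j : ℝ) / 2) *
      ∑ p ∈ (Finset.range j ×ˢ Finset.range j).filter (fun p => p.1 + p.2 + 2 = j),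
        (B ω * M ^ p.1 * (B ω) * M ^ p.2).trace)
    (i j : ℕ) :
    (∫ ω, T j ω ∂μ) = 0 ∧
    (∫ ω, T i ω * T j ω ∂μ) =
      ((i : ℝ) * j / 2) *
        ∑ v ∈ Finset.univ.erase o, ∫ ω, Y i o v ω * Y j o v ω ∂μ := by
  classical
  -- basic bounds on M
  have hM0 : ∀ u v, 0 ≤ M u v ∧ M u v ≤ 1 := by
    intro u v
    rw [hM]
    split
    · refine ⟨by positivity, ?_⟩
      rcases Nat.eq_zero_or_pos d with hd | hd
      · simp [hd]
      · rw [div_le_one (by exact_mod_cast hd)]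
        exact_mod_cast hd
    · exact ⟨le_refl _, zero_le_one⟩
  have hMrow : ∀ u, ∑ v, M u v ≤ 1 := by
    intro u
    have h1 : ∑ v, M u v = ∑ v ∈ Finset.univ.filter (G.Adj u), (1 : ℝ) / d := by
      rw [Finset.sum_filter]
      exact Finset.sum_congr rfl fun v _ => hM u v
    rw [h1, Finset.sum_const, nsmul_eq_mul]
    have hcard : (Finset.univ.filter (G.Adj u)).card = d := by
      rw [← hreg u, SimpleGraph.degree, SimpleGraph.neighborFinset_eq_filter]
    rw [hcard]
    rcases Nat.eq_zero_or_pos d with hd | hd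
    · simp [hd]
    · rw [mul_one_div, div_self (by exact_mod_cast hd.ne')]
  have hMpow : ∀ p : ℕ, (∀ a b, 0 ≤ (M ^ p) a b) ∧ ∀ a, ∑ b, (M ^ p) a b ≤ 1 := by
    intro p
    induction p with
    | zero =>
      refine ⟨fun a b => ?_, fun a => ?_⟩
      · rw [pow_zero, Matrix.one_apply]
        split <;> norm_num
      · rw [pow_zero]
        simp [Matrix.one_apply]
    | succ n ih =>
      constructor
      · intro a b
        rw [pow_succ, Matrix.mul_apply]
        exact Finset.sum_nonneg fun c _ => mul_nonneg (ih.1 a c) (hM0 c b).1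
      · intro a
        simp only [pow_succ, Matrix.mul_apply]
        rw [Finset.sum_comm]
        calc ∑ c, ∑ b, (M ^ n) a c * M c b
            = ∑ c, (M ^ n) a c * ∑ b, M c b := by
              exact Finset.sum_congr rfl fun c _ => (Finset.mul_sum _ _ _).symm
          _ ≤ ∑ c, (M ^ n) a c * 1 :=
              Finset.sum_le_sum fun c _ => mul_le_mul_of_nonneg_left (hMrow c) (ih.1 a c)
          _ = ∑ c, (M ^ n) a c := by simp
          _ ≤ 1 := ih.2 a
  have hMpow1 : ∀ (p : ℕ) (a b : V), |(M ^ p) a b| ≤ 1 := by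
    intro p a b
    rw [abs_of_nonneg ((hMpow p).1 a b)]
    calc (M ^ p) a b ≤ ∑ c, (M ^ p) a c :=
          Finset.single_le_sum (f := fun c => (M ^ p) a c) (fun c _ => (hMpow p).1 a c)
            (Finset.mem_univ b)
      _ ≤ 1 := (hMpow p).2 a
  -- invariance of M under automorphisms
  have hMinv : ∀ e : Equiv.Perm V, (∀ a b : V, G.Adj (e a) (e b) ↔ G.Adj a b) →
      ∀ (p : ℕ) (a b : V), (M ^ p) (e a) (e b) = (M ^ p) a b := by
    intro e he p
    induction p with
    | zero =>
      intro a b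
      simp [pow_zero, Matrix.one_apply, e.injective.eq_iff]
    | succ n ih =>
      intro a b
      rw [pow_succ, Matrix.mul_apply, Matrix.mul_apply, ← Equiv.sum_comp e
        (fun c => (M ^ n) (e a) c * M c (e b))]
      refine Finset.sum_congr rfl fun c _ => ?_
      rw [ih a c, hM, hM, if_congr (he c b) rfl rfl]
  -- diagonal entries of B * M^p vanish pointwise
  have hdiag : ∀ ω (p : ℕ) (v : V), (B ω * M ^ p) v v = 0 := by
    intro ω p v
    set S : Finset (Equiv.Perm V) := Finset.univ.filter
      (fun e : Equiv.Perm V =>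
        (∀ a b : V, G.Adj (e a) (e b) ↔ G.Adj a b) ∧ e v = v) with hSdef
    have h1 : (1 : Equiv.Perm V) ∈ S := by
      simp [hSdef]
    have hcard : 0 < S.card := Finset.card_pos.mpr ⟨1, h1⟩
    have hkey : (S.card : ℝ) * ((B ω * M ^ p) v v) = 0 := by
      calc (S.card : ℝ) * ((B ω * M ^ p) v v)
          = ∑ _g ∈ S, (B ω * M ^ p) v v := by rw [Finset.sum_const, nsmul_eq_mul]
        _ = ∑ g ∈ S, ∑ a, B ω v (g a) * (M ^ p) a v := by
            refine Finset.sum_congr rfl fun g hg => ?_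
            rw [hSdef, Finset.mem_filter] at hg
            obtain ⟨-, hg1, hg2⟩ := hg
            rw [Matrix.mul_apply, ← Equiv.sum_comp g (fun a => B ω v a * (M ^ p) a v)]
            refine Finset.sum_congr rfl fun a _ => ?_
            have : (M ^ p) (g a) v = (M ^ p) a v := by
              conv_lhs => rw [← hg2]
              rw [hMinv g hg1]
            rw [this]
        _ = ∑ a, (∑ g ∈ S, B ω v (g a)) * (M ^ p) a v := by
            rw [Finset.sum_comm]
            exact Finset.sum_congr rfl fun a _ => (Finset.sum_mul _ _ _).symm
        _ = 0 := by
            refine Finset.sum_eq_zero fun a _ => ?_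
            rw [hSdef, hstab ω v a, zero_mul]
    have hne : (S.card : ℝ) ≠ 0 := by exact_mod_cast hcard.ne'
    exact (mul_eq_zero.mp hkey).resolve_left hne
  have hYdiag : ∀ k (v : V) ω, Y k v v ω = 0 := by
    intro k v ω
    rw [hY]
    exact Finset.sum_eq_zero fun p _ => by rw [hdiag, zero_mul]
  have hYsymm : ∀ k (v w : V) ω, Y k w v ω = Y k v w ω := by
    intro k v w ω
    rw [hY, hY]
    refine Finset.sum_nbij' (fun p => (p.2, p.1)) (fun p => (p.2, p.1)) ?_ ?_ ?_ ?_ ?_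
    · intro p hp
      simp only [Finset.mem_filter, Finset.mem_product, Finset.mem_range] at hp ⊢
      omega
    · intro p hp
      simp only [Finset.mem_filter, Finset.mem_product, Finset.mem_range] at hp ⊢
      omega
    · intro p _; rfl
    · intro p _; rfl
    · intro p _
      exact mul_comm _ _
  -- measurability
  have hBMmeas : ∀ (p : ℕ) (v w : V), Measurable fun ω => (B ω * M ^ p) v w := by
    intro p v w
    simp only [Matrix.mul_apply]
    exact Finset.measurable_sum _ fun a _ => (hBmeas v a).mul_const _
  have hYmeas : ∀ k (v w : V), Measurable (Y k v w) := by
    intro k v w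
    have : Y k v w = fun ω =>
        ∑ p ∈ (Finset.range k ×ˢ Finset.range k).filter (fun p => p.1 + p.2 + 2 = k),
          (B ω * M ^ p.1) v w * (B ω * M ^ p.2) w v := funext fun ω => hY k v w ω
    rw [this]
    exact Finset.measurable_sum _ fun p _ => (hBMmeas p.1 v w).mul (hBMmeas p.2 w v)
  -- a.e. bounds
  set C : ℝ := c₁ * (Fintype.card V) with hCdef
  have hC0 : 0 ≤ C := by positivity
  have hBM_bd : ∀ᵐ ω ∂μ, ∀ (p : ℕ) (v w : V), |(B ω * M ^ p) v w| ≤ C := by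
    filter_upwards [hBbound] with ω hω
    intro p v w
    rw [Matrix.mul_apply]
    calc |∑ a, B ω v a * (M ^ p) a w| ≤ ∑ a, |B ω v a * (M ^ p) a w| :=
          Finset.abs_sum_le_sum_abs _ _
      _ ≤ ∑ _a : V, c₁ := by
          refine Finset.sum_le_sum fun a _ => ?_
          rw [abs_mul]
          have h1 : |B ω v a| ≤ c₁ := le_trans (hω v a)
            (by nlinarith [(hM0 v a).1, (hM0 v a).2])
          calc |B ω v a| * |(M ^ p) a w| ≤ c₁ * 1 :=
                mul_le_mul h1 (hMpow1 p a w) (abs_nonneg _) hc₁.le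
            _ = c₁ := mul_one _
      _ = C := by rw [Finset.sum_const, nsmul_eq_mul, hCdef, mul_comm, Finset.card_univ]
  -- integrability of products of entries
  have hint1 : ∀ (p : ℕ) (v w : V), Integrable (fun ω => (B ω * M ^ p) v w) μ := by
    intro p v w
    refine Integrable.mono' (integrable_const C) (hBMmeas p v w).aestronglyMeasurable ?_
    filter_upwards [hBM_bd] with ω hω
    exact hω p v w
  have hint2 : ∀ (p q : ℕ) (v w v' w' : V),
      Integrable (fun ω => (B ω * M ^ p) v w * (B ω * M ^ q) v' w') μ := by
    intro p q v w v' w'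
    refine Integrable.mono' (integrable_const (C * C))
      ((hBMmeas p v w).mul (hBMmeas q v' w')).aestronglyMeasurable ?_
    filter_upwards [hBM_bd] with ω hω
    rw [Real.norm_eq_abs, abs_mul]
    exact mul_le_mul (hω p v w) (hω q v' w') (abs_nonneg _) hC0
  have hint3 : ∀ (p q r : ℕ) (v w v' w' v'' w'' : V),
      Integrable (fun ω => (B ω * M ^ p) v w * (B ω * M ^ q) v' w'
        * (B ω * M ^ r) v'' w'') μ := by
    intro p q r v w v' w' v'' w''
    refine Integrable.mono' (integrable_const (C * C * C))
      (((hBMmeas p v w).mul (hBMmeas q v' w')).mul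
        (hBMmeas r v'' w'')).aestronglyMeasurable ?_
    filter_upwards [hBM_bd] with ω hω
    rw [Real.norm_eq_abs, abs_mul, abs_mul]
    exact mul_le_mul (mul_le_mul (hω p v w) (hω q v' w') (abs_nonneg _) hC0)
      (hω r v'' w'') (abs_nonneg _) (by positivity)
  have hint4 : ∀ (p q r s : ℕ) (v₁ w₁ v₂ w₂ v₃ w₃ v₄ w₄ : V),
      Integrable (fun ω => (B ω * M ^ p) v₁ w₁ * (B ω * M ^ q) v₂ w₂
        * ((B ω * M ^ r) v₃ w₃ * (B ω * M ^ s) v₄ w₄)) μ := by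
    intro p q r s v₁ w₁ v₂ w₂ v₃ w₃ v₄ w₄
    refine Integrable.mono' (integrable_const ((C * C) * (C * C)))
      (((hBMmeas p v₁ w₁).mul (hBMmeas q v₂ w₂)).mul
        ((hBMmeas r v₃ w₃).mul (hBMmeas s v₄ w₄))).aestronglyMeasurable ?_
    filter_upwards [hBM_bd] with ω hω
    rw [Real.norm_eq_abs, abs_mul, abs_mul, abs_mul]
    exact mul_le_mul
      (mul_le_mul (hω p v₁ w₁) (hω q v₂ w₂) (abs_nonneg _) hC0)
      (mul_le_mul (hω r v₃ w₃) (hω s v₄ w₄) (abs_nonneg _) hC0)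
      (by positivity) (by positivity)
  have hYint : ∀ k (v w : V), Integrable (Y k v w) μ := by
    intro k v w
    have : Y k v w = fun ω =>
        ∑ p ∈ (Finset.range k ×ˢ Finset.range k).filter (fun p => p.1 + p.2 + 2 = k),
          (B ω * M ^ p.1) v w * (B ω * M ^ p.2) w v := funext fun ω => hY k v w ω
    rw [this]
    exact integrable_finset_sum _ fun p _ => hint2 p.1 p.2 v w w v
  have hYbd : ∀ k (v w : V), ∀ᵐ ω ∂μ, |Y k v w ω| ≤ (k * k : ℕ) * (C * C) := by
    intro k v w
    filter_upwards [hBM_bd] with ω hω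
    rw [hY]
    calc |∑ p ∈ (Finset.range k ×ˢ Finset.range k).filter (fun p => p.1 + p.2 + 2 = k),
          (B ω * M ^ p.1) v w * (B ω * M ^ p.2) w v|
        ≤ ∑ p ∈ (Finset.range k ×ˢ Finset.range k).filter (fun p => p.1 + p.2 + 2 = k),
          |(B ω * M ^ p.1) v w * (B ω * M ^ p.2) w v| := Finset.abs_sum_le_sum_abs _ _
      _ ≤ ∑ _p ∈ (Finset.range k ×ˢ Finset.range k).filter (fun p => p.1 + p.2 + 2 = k),
          (C * C) := by
          refine Finset.sum_le_sum fun p _ => ?_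
          rw [abs_mul]
          exact mul_le_mul (hω p.1 v w) (hω p.2 w v) (abs_nonneg _) hC0
      _ ≤ (k * k : ℕ) * (C * C) := by
          rw [Finset.sum_const, nsmul_eq_mul]
          have hcard : ((Finset.range k ×ˢ Finset.range k).filter
              (fun p => p.1 + p.2 + 2 = k)).card ≤ k * k := by
            calc _ ≤ (Finset.range k ×ˢ Finset.range k).card :=
                  Finset.card_filter_le _ _
              _ = k * k := by rw [Finset.card_product, Finset.card_range]
          exact mul_le_mul_of_nonneg_right (by exact_mod_cast hcard) (by positivity)
  have hYYint : ∀ k l (v w v' w' : V),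
      Integrable (fun ω => Y k v w ω * Y l v' w' ω) μ := by
    intro k l v w v' w'
    refine Integrable.mono' (integrable_const (((k * k : ℕ) * (C * C)) * ((l * l : ℕ) * (C * C))))
      ((hYmeas k v w).mul (hYmeas l v' w')).aestronglyMeasurable ?_
    filter_upwards [hYbd k v w, hYbd l v' w'] with ω h1 h2
    rw [Real.norm_eq_abs, abs_mul]
    exact mul_le_mul h1 h2 (abs_nonneg _) (by positivity)
  -- mean-zero facts
  have hmean' : ∀ v a : V, (∫ ω, B ω v a ∂μ) = 0 := by
    intro v a
    by_cases h : G.Adj v a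
    · exact hmean v a h
    · have hz : (fun ω => B ω v a) =ᵐ[μ] 0 := by
        filter_upwards [hBbound] with ω hω
        have := hω v a
        rw [hM] at this
        simp only [h, if_false, mul_zero] at this
        simpa using abs_nonpos_iff.mp this
      rw [integral_congr_ae hz]
      simp
  have hBint : ∀ u v : V, Integrable (fun ω => B ω u v) μ := by
    intro u v
    refine Integrable.mono' (integrable_const c₁) (hBmeas u v).aestronglyMeasurable ?_
    filter_upwards [hBbound] with ω hω
    exact le_trans (hω u v) (by nlinarith [(hM0 u v).1, (hM0 u v).2])
  have hBMmean : ∀ (p : ℕ) (v w : V), (∫ ω, (B ω * M ^ p) v w ∂μ) = 0 := by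
    intro p v w
    simp only [Matrix.mul_apply]
    rw [integral_finset_sum _ fun a _ => (hBint v a).mul_const _]
    refine Finset.sum_eq_zero fun a _ => ?_
    rw [integral_mul_const, hmean', zero_mul]
  -- independence machinery
  have hrowmeas : ∀ u : V, Measurable fun ω => (fun v => B ω u v) :=
    fun u => measurable_pi_lambda _ (hBmeas u)
  have key : ∀ (x : V) (Tf : Finset V), x ∉ Tf →
      ∀ (φ : (V → ℝ) → ℝ) (ψ : (Tf → (V → ℝ)) → ℝ), Measurable φ → Measurable ψ →
      IndepFun (fun ω => φ (fun a => B ω x a)) (fun ω => ψ (fun i => fun a => B ω i a)) μ := by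
    intro x Tf hx φ ψ hφ hψ
    have h := hrows.indepFun_finset {x} Tf (by simpa using hx) hrowmeas
    exact h.comp (hφ.comp (measurable_pi_apply ⟨x, Finset.mem_singleton_self x⟩)) hψ
  -- expectation of product with one isolated row vanishes (1 vs 1)
  have keyzero2 : ∀ x y : V, x ≠ y → ∀ (px py : ℕ) (cx cy : V),
      (∫ ω, (B ω * M ^ px) x cx * (B ω * M ^ py) y cy ∂μ) = 0 := by
    intro x y hxy px py cx cy
    have hy : y ∈ ({y} : Finset V) := Finset.mem_singleton_self y
    set φ : (V → ℝ) → ℝ := fun r => ∑ a, r a * (M ^ px) a cx with hφdef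
    set ψ : (({y} : Finset V) → (V → ℝ)) → ℝ :=
      fun g => ∑ a, g ⟨y, hy⟩ a * (M ^ py) a cy with hψdef
    have hφm : Measurable φ :=
      Finset.measurable_sum _ fun a _ => (measurable_pi_apply a).mul_const _
    have hψm : Measurable ψ :=
      Finset.measurable_sum _ fun a _ =>
        ((measurable_pi_apply a).comp (measurable_pi_apply (⟨y, hy⟩ : ({y} : Finset V)))).mul_const _
    have hind := key x {y} (by simp [hxy]) φ ψ hφm hψm
    have hXeq : (fun ω => φ fun a => B ω x a) = fun ω => (B ω * M ^ px) x cx := by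
      funext ω
      simp only [hφdef, Matrix.mul_apply]
    have hZeq : (fun ω => ψ fun i a => B ω (↑i) a) = fun ω => (B ω * M ^ py) y cy := by
      funext ω
      simp only [hψdef, Matrix.mul_apply]
    rw [hXeq, hZeq] at hind
    have h2 : (∫ ω, (B ω * M ^ px) x cx * (B ω * M ^ py) y cy ∂μ)
        = (∫ ω, (B ω * M ^ px) x cx ∂μ) * ∫ ω, (B ω * M ^ py) y cy ∂μ := by
      simpa [Pi.mul_def] using hind.integral_mul_eq_mul_integral (hint1 px x cx).aestronglyMeasurable (hint1 py y cy).aestronglyMeasurable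
    rw [h2, hBMmean, zero_mul]
  -- expectation of product with one isolated row vanishes (1 vs 3)
  have keyzero : ∀ x y z t : V, x ≠ y → x ≠ z → x ≠ t →
      ∀ (px py pz pt : ℕ) (cx cy cz ct : V),
      (∫ ω, (B ω * M ^ px) x cx *
        ((B ω * M ^ py) y cy * (B ω * M ^ pz) z cz * (B ω * M ^ pt) t ct) ∂μ) = 0 := by
    intro x y z t hxy hxz hxt px py pz pt cx cy cz ct
    have hy : y ∈ ({y, z, t} : Finset V) := by simp
    have hz : z ∈ ({y, z, t} : Finset V) := by simp
    have ht : t ∈ ({y, z, t} : Finset V) := by simp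
    set φ : (V → ℝ) → ℝ := fun r => ∑ a, r a * (M ^ px) a cx with hφdef
    set ψ : (({y, z, t} : Finset V) → (V → ℝ)) → ℝ :=
      fun g => (∑ a, g ⟨y, hy⟩ a * (M ^ py) a cy) * (∑ a, g ⟨z, hz⟩ a * (M ^ pz) a cz)
        * (∑ a, g ⟨t, ht⟩ a * (M ^ pt) a ct) with hψdef
    have hφm : Measurable φ :=
      Finset.measurable_sum _ fun a _ => (measurable_pi_apply a).mul_const _
    have hψm : Measurable ψ := by
      refine Measurable.mul (Measurable.mul ?_ ?_) ?_ <;>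
        exact Finset.measurable_sum _ fun a _ =>
          ((measurable_pi_apply a).comp (measurable_pi_apply _)).mul_const _
    have hind := key x {y, z, t} (by simp [hxy, hxz, hxt]) φ ψ hφm hψm
    have hXeq : (fun ω => φ fun a => B ω x a) = fun ω => (B ω * M ^ px) x cx := by
      funext ω
      simp only [hφdef, Matrix.mul_apply]
    have hZeq : (fun ω => ψ fun i a => B ω (↑i) a) = fun ω =>
        (B ω * M ^ py) y cy * (B ω * M ^ pz) z cz * (B ω * M ^ pt) t ct := by
      funext ω
      simp only [hψdef, Matrix.mul_apply]
    rw [hXeq, hZeq] at hind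
    have h2 : (∫ ω, (B ω * M ^ px) x cx *
          ((B ω * M ^ py) y cy * (B ω * M ^ pz) z cz * (B ω * M ^ pt) t ct) ∂μ)
        = (∫ ω, (B ω * M ^ px) x cx ∂μ) *
          ∫ ω, (B ω * M ^ py) y cy * (B ω * M ^ pz) z cz * (B ω * M ^ pt) t ct ∂μ := by
      simpa [Pi.mul_def] using hind.integral_mul_eq_mul_integral (hint1 px x cx).aestronglyMeasurable
        (hint3 py pz pt y cy z cz t ct).aestronglyMeasurable
    rw [h2, hBMmean, zero_mul]
  have hYmean : ∀ k (v w : V), (∫ ω, Y k v w ω ∂μ) = 0 := by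
    intro k v w
    by_cases hvw : v = w
    · subst hvw
      have : (fun ω => Y k v v ω) = fun _ => (0 : ℝ) := funext fun ω => hYdiag k v ω
      rw [this]
      simp
    · have hre : (fun ω => Y k v w ω) = fun ω =>
          ∑ p ∈ (Finset.range k ×ˢ Finset.range k).filter (fun p => p.1 + p.2 + 2 = k),
            (B ω * M ^ p.1) v w * (B ω * M ^ p.2) w v := funext fun ω => hY k v w ω
      rw [hre, integral_finset_sum _ fun p _ => hint2 p.1 p.2 v w w v]
      exact Finset.sum_eq_zero fun p _ => keyzero2 v w hvw p.1 p.2 w v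
  have term_vanish : ∀ v w v' w' : V, v ≠ w → v' ≠ w' →
      (v', w') ≠ (v, w) → (v', w') ≠ (w, v) → ∀ p1 p2 q1 q2 : ℕ,
      (∫ ω, ((B ω * M ^ p1) v w * (B ω * M ^ p2) w v) *
        ((B ω * M ^ q1) v' w' * (B ω * M ^ q2) w' v') ∂μ) = 0 := by
    intro v w v' w' hvw hv'w' h1 h2 p1 p2 q1 q2
    by_cases hv' : v' = v ∨ v' = w
    · have hw' : ¬(w' = v ∨ w' = w) := by
        rcases hv' with rfl | rfl
        · rintro (rfl | rfl)
          · exact hv'w' rfl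
          · exact h1 rfl
        · rintro (rfl | rfl)
          · exact h2 rfl
          · exact hv'w' rfl
      push_neg at hw'
      have heq : (fun ω => ((B ω * M ^ p1) v w * (B ω * M ^ p2) w v) *
          ((B ω * M ^ q1) v' w' * (B ω * M ^ q2) w' v'))
          = fun ω => (B ω * M ^ q2) w' v' *
            ((B ω * M ^ p1) v w * (B ω * M ^ p2) w v * (B ω * M ^ q1) v' w') := by
        funext ω; ring
      rw [heq]
      exact keyzero w' v w v' hw'.1 hw'.2 (Ne.symm hv'w') q2 p1 p2 q1 v' w v w'
    · push_neg at hv'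
      have heq : (fun ω => ((B ω * M ^ p1) v w * (B ω * M ^ p2) w v) *
          ((B ω * M ^ q1) v' w' * (B ω * M ^ q2) w' v'))
          = fun ω => (B ω * M ^ q1) v' w' *
            ((B ω * M ^ p1) v w * (B ω * M ^ p2) w v * (B ω * M ^ q2) w' v') := by
        funext ω; ring
      rw [heq]
      exact keyzero v' v w w' hv'.1 hv'.2 hv'w' q1 p1 p2 q2 w' w v v'
  have Ivanish : ∀ v w v' w' : V, (v', w') ≠ (v, w) → (v', w') ≠ (w, v) →
      (∫ ω, Y i v w ω * Y j v' w' ω ∂μ) = 0 := by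
    intro v w v' w' h1 h2
    by_cases hvw : v = w
    · subst hvw
      have hzz : (fun ω => Y i v v ω * Y j v' w' ω) = fun _ => (0 : ℝ) :=
        funext fun ω => by rw [hYdiag, zero_mul]
      rw [hzz]; simp
    by_cases hv'w' : v' = w'
    · subst hv'w'
      have hzz : (fun ω => Y i v w ω * Y j v' v' ω) = fun _ => (0 : ℝ) :=
        funext fun ω => by rw [hYdiag, mul_zero]
      rw [hzz]; simp
    have hre : (fun ω => Y i v w ω * Y j v' w' ω) = fun ω =>
        ∑ p ∈ (Finset.range i ×ˢ Finset.range i).filter (fun p => p.1 + p.2 + 2 = i),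
          ∑ q ∈ (Finset.range j ×ˢ Finset.range j).filter (fun q => q.1 + q.2 + 2 = j),
            ((B ω * M ^ p.1) v w * (B ω * M ^ p.2) w v) *
              ((B ω * M ^ q.1) v' w' * (B ω * M ^ q.2) w' v') := by
      funext ω
      rw [hY, hY, Finset.sum_mul_sum]
    rw [hre, integral_finset_sum _ fun p _ =>
      integrable_finset_sum _ fun q _ => hint4 p.1 p.2 q.1 q.2 v w w v v' w' w' v']
    refine Finset.sum_eq_zero fun p _ => ?_
    rw [integral_finset_sum _ fun q _ => hint4 p.1 p.2 q.1 q.2 v w w v v' w' w' v']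
    exact Finset.sum_eq_zero fun q _ =>
      term_vanish v w v' w' hvw hv'w' h1 h2 p.1 p.2 q.1 q.2
  -- trace expansion
  have htr : ∀ ω (p1 p2 : ℕ), (B ω * M ^ p1 * B ω * M ^ p2).trace
      = ∑ v, ∑ w, (B ω * M ^ p1) v w * (B ω * M ^ p2) w v := by
    intro ω p1 p2
    rw [mul_assoc (B ω * M ^ p1) (B ω) (M ^ p2)]
    simp [Matrix.trace, Matrix.mul_apply]
  have hTY : ∀ k ω, T k ω = (Real.sqrt (Fintype.card V))⁻¹ * ((k : ℝ) / 2) *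
      ∑ v, ∑ w, Y k v w ω := by
    intro k ω
    rw [hT]
    congr 1
    calc ∑ p ∈ (Finset.range k ×ˢ Finset.range k).filter (fun p => p.1 + p.2 + 2 = k),
          (B ω * M ^ p.1 * B ω * M ^ p.2).trace
        = ∑ p ∈ (Finset.range k ×ˢ Finset.range k).filter (fun p => p.1 + p.2 + 2 = k),
          ∑ v, ∑ w, (B ω * M ^ p.1) v w * (B ω * M ^ p.2) w v :=
          Finset.sum_congr rfl fun p _ => htr ω p.1 p.2
      _ = ∑ v, ∑ p ∈ (Finset.range k ×ˢ Finset.range k).filter (fun p => p.1 + p.2 + 2 = k),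
          ∑ w, (B ω * M ^ p.1) v w * (B ω * M ^ p.2) w v := Finset.sum_comm
      _ = ∑ v, ∑ w, ∑ p ∈ (Finset.range k ×ˢ Finset.range k).filter (fun p => p.1 + p.2 + 2 = k),
          (B ω * M ^ p.1) v w * (B ω * M ^ p.2) w v :=
          Finset.sum_congr rfl fun v _ => Finset.sum_comm
      _ = ∑ v, ∑ w, Y k v w ω :=
          Finset.sum_congr rfl fun v _ => Finset.sum_congr rfl fun w _ => (hY k v w ω).symm
  -- part 1
  have part1 : (∫ ω, T j ω ∂μ) = 0 := by
    rw [show (fun ω => T j ω) = fun ω => (Real.sqrt (Fintype.card V))⁻¹ * ((j : ℝ) / 2) *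
        ∑ v, ∑ w, Y j v w ω from funext fun ω => hTY j ω]
    rw [integral_const_mul, integral_finset_sum _ fun v _ =>
      integrable_finset_sum _ fun w _ => hYint j v w]
    have : ∀ v : V, (∫ ω, ∑ w, Y j v w ω ∂μ) = 0 := by
      intro v
      rw [integral_finset_sum _ fun w _ => hYint j v w]
      exact Finset.sum_eq_zero fun w _ => hYmean j v w
    rw [Finset.sum_eq_zero fun v _ => this v, mul_zero]
  refine ⟨part1, ?_⟩
  -- part 2
  have inner : ∀ v w : V, (∑ Q : V × V, ∫ ω, Y i v w ω * Y j Q.1 Q.2 ω ∂μ) =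
      2 * ∫ ω, Y i v w ω * Y j v w ω ∂μ := by
    intro v w
    by_cases hvw : v = w
    · subst hvw
      have hz : ∀ v' w' : V, (∫ ω, Y i v v ω * Y j v' w' ω ∂μ) = 0 := by
        intro v' w'
        have hzz : (fun ω => Y i v v ω * Y j v' w' ω) = fun _ => (0 : ℝ) :=
          funext fun ω => by rw [hYdiag, zero_mul]
        rw [hzz]; simp
      rw [Finset.sum_eq_zero fun Q _ => hz Q.1 Q.2, hz v v, mul_zero]
    · have hne : ((v, w) : V × V) ≠ (w, v) := by
        simp only [ne_eq, Prod.mk.injEq, not_and]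
        intro h; exact absurd h hvw
      have hsub : (∑ Q ∈ ({(v, w), (w, v)} : Finset (V × V)),
            ∫ ω, Y i v w ω * Y j Q.1 Q.2 ω ∂μ)
          = ∑ Q : V × V, ∫ ω, Y i v w ω * Y j Q.1 Q.2 ω ∂μ := by
        refine Finset.sum_subset (Finset.subset_univ _) fun Q _ hQ => ?_
        simp only [Finset.mem_insert, Finset.mem_singleton] at hQ
        push_neg at hQ
        exact Ivanish v w Q.1 Q.2 (by simpa using hQ.1) (by simpa using hQ.2)
      rw [← hsub, Finset.sum_pair hne]
      have hswap : (∫ ω, Y i v w ω * Y j w v ω ∂μ) = ∫ ω, Y i v w ω * Y j v w ω ∂μ := by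
        have hzz : (fun ω => Y i v w ω * Y j w v ω) = fun ω => Y i v w ω * Y j v w ω :=
          funext fun ω => by rw [hYsymm j v w ω]
        rw [hzz]
      rw [hswap]
      ring
  have hentry : ∀ (k : ℕ) (x y : V),
      Measurable fun A : V → V → ℝ => ∑ a, A x a * (M ^ k) a y := by
    intro k x y
    exact Finset.measurable_sum _ fun a _ =>
      ((measurable_pi_apply a).comp (measurable_pi_apply x)).mul_const _
  have hBmeas' : Measurable (fun ω => fun u v : V => B ω u v) :=
    measurable_pi_lambda _ fun u => measurable_pi_lambda _ fun v => hBmeas u v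
  have gtrans : ∀ v : V, (∑ w, ∫ ω, Y i v w ω * Y j v w ω ∂μ) =
      ∑ w, ∫ ω, Y i o w ω * Y j o w ω ∂μ := by
    intro v
    obtain ⟨e, he, heo⟩ := htrans o v
    have hB'meas : Measurable (fun ω => fun u v : V => B ω (e u) (e v)) :=
      measurable_pi_lambda _ fun u => measurable_pi_lambda _ fun v => hBmeas (e u) (e v)
    have hmain : ∀ w : V, (∫ ω, Y i o w ω * Y j o w ω ∂μ)
        = ∫ ω, Y i v (e w) ω * Y j v (e w) ω ∂μ := by
      intro w
      set F : (V → V → ℝ) → ℝ := fun A =>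
        (∑ p ∈ (Finset.range i ×ˢ Finset.range i).filter (fun p => p.1 + p.2 + 2 = i),
          (∑ a, A o a * (M ^ p.1) a w) * (∑ a, A w a * (M ^ p.2) a o)) *
        (∑ q ∈ (Finset.range j ×ˢ Finset.range j).filter (fun q => q.1 + q.2 + 2 = j),
          (∑ a, A o a * (M ^ q.1) a w) * (∑ a, A w a * (M ^ q.2) a o)) with hFdef
      have hFmeas : Measurable F :=
        (Finset.measurable_sum _ fun p _ => (hentry p.1 o w).mul (hentry p.2 w o)).mul
          (Finset.measurable_sum _ fun q _ => (hentry q.1 o w).mul (hentry q.2 w o))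
      have e1 := integral_map (μ := μ) (φ := fun ω => fun u v : V => B ω (e u) (e v)) (f := F)
        hB'meas.aemeasurable hFmeas.aestronglyMeasurable
      have e2 := integral_map (μ := μ) (φ := fun ω => fun u v : V => B ω u v) (f := F)
        hBmeas'.aemeasurable hFmeas.aestronglyMeasurable
      have h1 : (∫ ω, F (fun u v : V => B ω (e u) (e v)) ∂μ)
          = ∫ ω, F (fun u v : V => B ω u v) ∂μ := by
        rw [← e1, hinv e he, e2]
      have hBMe : ∀ ω (k : ℕ) (x y : V),
          (∑ a, B ω (e x) (e a) * (M ^ k) a y) = (B ω * M ^ k) (e x) (e y) := by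
        intro ω k x y
        rw [Matrix.mul_apply]
        calc ∑ a, B ω (e x) (e a) * (M ^ k) a y
            = ∑ a, B ω (e x) (e a) * (M ^ k) (e a) (e y) :=
              Finset.sum_congr rfl fun a _ => by rw [hMinv e he]
          _ = ∑ a, B ω (e x) a * (M ^ k) a (e y) :=
              Equiv.sum_comp e (fun a => B ω (e x) a * (M ^ k) a (e y))
      have h2 : ∀ ω, F (fun u v : V => B ω (e u) (e v)) = Y i v (e w) ω * Y j v (e w) ω := by
        intro ω
        rw [hY, hY, hFdef]
        simp only [hBMe]
        simp only [heo]
      have h3 : ∀ ω, F (fun u v : V => B ω u v) = Y i o w ω * Y j o w ω := by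
        intro ω
        rw [hY, hY, hFdef]
        simp only [Matrix.mul_apply]
      calc (∫ ω, Y i o w ω * Y j o w ω ∂μ) = ∫ ω, F (fun u v : V => B ω u v) ∂μ := by
            rw [show (fun ω => Y i o w ω * Y j o w ω)
              = fun ω => F (fun u v : V => B ω u v) from funext fun ω => (h3 ω).symm]
        _ = ∫ ω, F (fun u v : V => B ω (e u) (e v)) ∂μ := h1.symm
        _ = ∫ ω, Y i v (e w) ω * Y j v (e w) ω ∂μ := by
            rw [show (fun ω => F (fun u v : V => B ω (e u) (e v)))
              = fun ω => Y i v (e w) ω * Y j v (e w) ω from funext h2]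
    refine Eq.symm ?_
    calc ∑ w, ∫ ω, Y i o w ω * Y j o w ω ∂μ
        = ∑ w, ∫ ω, Y i v (e w) ω * Y j v (e w) ω ∂μ :=
          Finset.sum_congr rfl fun w _ => hmain w
      _ = ∑ w, ∫ ω, Y i v w ω * Y j v w ω ∂μ :=
          Equiv.sum_comp e (fun w => ∫ ω, Y i v w ω * Y j v w ω ∂μ)
  -- final assembly
  have hNpos : (0 : ℝ) < (Fintype.card V : ℝ) := by
    have : Nonempty V := ⟨o⟩
    exact_mod_cast Fintype.card_pos
  set S : ℝ := ∑ v ∈ Finset.univ.erase o, ∫ ω, Y i o v ω * Y j o v ω ∂μ with hSdef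
  have hgoo : (∫ ω, Y i o o ω * Y j o o ω ∂μ) = 0 := by
    have hzz : (fun ω => Y i o o ω * Y j o o ω) = fun _ => (0 : ℝ) :=
      funext fun ω => by rw [hYdiag, zero_mul]
    rw [hzz]; simp
  have hsum_o : (∑ w, ∫ ω, Y i o w ω * Y j o w ω ∂μ) = S := by
    rw [hSdef, ← Finset.sum_erase_add Finset.univ _ (Finset.mem_univ o), hgoo, add_zero]
  have hTT : (fun ω => T i ω * T j ω) = fun ω =>
      ((Real.sqrt (Fintype.card V))⁻¹ * ((i : ℝ) / 2) *
        ((Real.sqrt (Fintype.card V))⁻¹ * ((j : ℝ) / 2))) *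
      ∑ P : V × V, ∑ Q : V × V, Y i P.1 P.2 ω * Y j Q.1 Q.2 ω := by
    funext ω
    rw [hTY i ω, hTY j ω]
    have hmul : (∑ P : V × V, ∑ Q : V × V, Y i P.1 P.2 ω * Y j Q.1 Q.2 ω)
        = (∑ P : V × V, Y i P.1 P.2 ω) * (∑ Q : V × V, Y j Q.1 Q.2 ω) :=
      (Finset.sum_mul_sum _ _ _ _).symm
    rw [hmul]
    simp only [Fintype.sum_prod_type]
    ring
  rw [hTT, integral_const_mul, integral_finset_sum _ fun P _ =>
    integrable_finset_sum _ fun Q _ => hYYint i j P.1 P.2 Q.1 Q.2]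
  have hPsum : ∀ P : V × V, (∫ ω, ∑ Q : V × V, Y i P.1 P.2 ω * Y j Q.1 Q.2 ω ∂μ)
      = 2 * ∫ ω, Y i P.1 P.2 ω * Y j P.1 P.2 ω ∂μ := by
    intro P
    rw [integral_finset_sum _ fun Q _ => hYYint i j P.1 P.2 Q.1 Q.2]
    exact inner P.1 P.2
  rw [Finset.sum_congr rfl fun P _ => hPsum P]
  have hbig : (∑ P : V × V, 2 * ∫ ω, Y i P.1 P.2 ω * Y j P.1 P.2 ω ∂μ)
      = 2 * ((Fintype.card V : ℝ) * S) := by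
    rw [← Finset.mul_sum]
    congr 1
    calc ∑ P : V × V, ∫ ω, Y i P.1 P.2 ω * Y j P.1 P.2 ω ∂μ
        = ∑ v, ∑ w, ∫ ω, Y i v w ω * Y j v w ω ∂μ := by
          simp only [Fintype.sum_prod_type]
      _ = ∑ _v : V, ∑ w, ∫ ω, Y i o w ω * Y j o w ω ∂μ :=
          Finset.sum_congr rfl fun v _ => gtrans v
      _ = (Fintype.card V : ℝ) * S := by
          rw [Finset.sum_const, hsum_o, nsmul_eq_mul, Finset.card_univ]
  rw [hbig]
  have hsq : Real.sqrt (Fintype.card V) * Real.sqrt (Fintype.card V)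
      = (Fintype.card V : ℝ) := Real.mul_self_sqrt (by positivity)
  have harr : ((Real.sqrt (Fintype.card V))⁻¹ * ((i : ℝ) / 2) *
        ((Real.sqrt (Fintype.card V))⁻¹ * ((j : ℝ) / 2))) *
      (2 * ((Fintype.card V : ℝ) * S))
      = ((Real.sqrt (Fintype.card V) * Real.sqrt (Fintype.card V))⁻¹ *
          (Fintype.card V : ℝ)) * (((i : ℝ) * j / 2) * S) := by
    ring
  rw [harr, hsq, inv_mul_cancel₀ hNpos.ne', one_mul]
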